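/- Let (r_n) be a strictly increasing sequence of positive reals with r_n → ∞ and r_{n+1} - r_n → 0. Then for every c with 0 < c < 1, there exists a sequence (k_n) of indices with k_n ≥ n such that r_{k_n} - r_n → c as n → ∞. -/
import Mathlib


theorem exists_subseq_gap {r : ℕ → ℝ} (hpos : ∀ n, 0 < r n) (hmono : StrictMono r)
    (htop : Filter.Tendsto r Filter.atTop Filter.atTop)
    (hdiff : Filter.Tendsto (fun n => r (n + 1) - r n) Filter.atTop (nhds 0))
    {c : ℝ} (hc0 : 0 < c) (hc1 : c < 1) :
    ∃ k : ℕ → ℕ, (∀ n, n ≤ k n) ∧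
      Filter.Tendsto (fun n => r (k n) - r n) Filter.atTop (nhds c) := by
  have hex : ∀ n, ∃ m, r n + c ≤ r m := by
    intro n
    obtain ⟨m, hm⟩ := (Filter.tendsto_atTop.mp htop (r n + c)).exists
    exact ⟨m, hm⟩
  set k : ℕ → ℕ := fun n => Nat.find (hex n) with hk
  have hge : ∀ n, r n + c ≤ r (k n) := fun n => Nat.find_spec (hex n)
  have hnlt : ∀ n, n < k n := by
    intro n
    by_contra h
    push_neg at h
    have : r (k n) ≤ r n := hmono.monotone h
    linarith [hge n]
  have hklt : ∀ n, r (k n - 1) < r n + c := by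
    intro n
    have h1 : k n - 1 < k n := Nat.sub_lt ((Nat.zero_le n).trans_lt (hnlt n)) one_pos
    have := Nat.find_min (hex n) h1
    push_neg at this
    exact this
  have hd : ∀ n, r (k n) - r n - c < r (k n - 1 + 1) - r (k n - 1) := by
    intro n
    have hkk : k n - 1 + 1 = k n := Nat.succ_pred_eq_of_pos ((Nat.zero_le n).trans_lt (hnlt n))
    rw [hkk]
    linarith [hklt n]
  have hk1 : Filter.Tendsto (fun n => k n - 1) Filter.atTop Filter.atTop := by
    apply Filter.tendsto_atTop_mono (f := fun n => n) _ Filter.tendsto_id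
    intro n
    exact Nat.le_sub_one_of_lt (hnlt n)
  have hd0 : Filter.Tendsto (fun n => r (k n - 1 + 1) - r (k n - 1)) Filter.atTop (nhds 0) :=
    hdiff.comp hk1
  have hsq : Filter.Tendsto (fun n => r (k n) - r n - c) Filter.atTop (nhds 0) := by
    apply squeeze_zero (g := fun n => r (k n - 1 + 1) - r (k n - 1))
    · intro n; linarith [hge n]
    · intro n; exact (hd n).le
    · exact hd0
  refine ⟨k, fun n => (hnlt n).le, ?_⟩
  have := hsq.add_const c
  simpa using this
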